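/- For all words u and v over a finite alphabet A, ι(u·v) = ι(u) + ι(r(u)·v), where r(u) is the rest of the arch factorization of u. -/

import Mathlib

/-- The subword universality index `ι(u)`: the largest `k` such that every word of
length `k` over the alphabet `A` is a subword (subsequence) of `u`. -/
noncomputable def univIndex {A : Type*} (u : List A) : ℕ :=
  sSup {k : ℕ | ∀ w : List A, w.length = k → w.Sublist u}

open Classical in
/-- The arch-jumping function `α` of a word `w`: `α(i)` is the least `j` such that the
factor `w(i,j)` contains every letter of the alphabet `A`, undefined if no such `j` exists. -/
noncomputable def alphaJump {A : Type*} (w : List A) (i : ℕ) : Option ℕ :=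
  if ∃ j, ∀ a : A, a ∈ (w.take j).drop i then
    some (sInf {j : ℕ | ∀ a : A, a ∈ (w.take j).drop i})
  else none

/-- `αⁿ(i)`: the `n`-fold iteration of the arch-jumping function `α` of `w`, starting
from position `i`; `none` if some intermediate step is undefined. -/
noncomputable def alphaIter {A : Type*} (w : List A) (n i : ℕ) : Option ℕ :=
  (fun o => o.bind (alphaJump w))^[n] (some i)

/-- The number of arches in the arch factorization of `w`:
the largest `n` such that `αⁿ(0)` is defined. -/
noncomputable def numArches {A : Type*} (w : List A) : ℕ :=
  sSup {n : ℕ | (alphaIter w n 0).isSome}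

/-- The rest `r(w)` of the arch factorization of `w`: the suffix of `w` remaining after
its arches, i.e. after position `α^m(0)` where `m` is the number of arches. -/
noncomputable def archRest {A : Type*} (w : List A) : List A :=
  w.drop ((alphaIter w (numArches w) 0).getD 0)

section
variable {A : Type*} [Nonempty A]

local infixl:50 " <+ " => List.Sublist

set_option linter.unusedSectionVars false

-- membership facts for the univIndex set
lemma uset_zero_mem (u : List A) :
    0 ∈ {k : ℕ | ∀ w : List A, w.length = k → w.Sublist u} := by
  intro w hw
  rw [List.length_eq_zero_iff] at hw
  simp [hw]

lemma uset_bdd (u : List A) :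
    BddAbove {k : ℕ | ∀ w : List A, w.length = k → w.Sublist u} := by
  refine ⟨u.length, fun k hk => ?_⟩
  have a : A := Classical.arbitrary A
  have h := hk (List.replicate k a) (by simp)
  simpa using h.length_le

lemma uset_mem_of_le {u : List A} {k k' : ℕ} (hk : k' ≤ k)
    (h : k ∈ {k : ℕ | ∀ w : List A, w.length = k → w.Sublist u}) :
    k' ∈ {k : ℕ | ∀ w : List A, w.length = k → w.Sublist u} := by
  intro w hw
  have a : A := Classical.arbitrary A
  have h2 := h (w ++ List.replicate (k - k') a) (by simp [hw]; omega)
  exact (List.sublist_append_left _ _).trans h2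

lemma univIndex_mem (u : List A) :
    univIndex u ∈ {k : ℕ | ∀ w : List A, w.length = k → w.Sublist u} :=
  Nat.sSup_mem ⟨0, uset_zero_mem u⟩ (uset_bdd u)

lemma univIndex_succ_not_mem (u : List A) :
    univIndex u + 1 ∉ {k : ℕ | ∀ w : List A, w.length = k → w.Sublist u} := by
  intro h
  have := le_csSup (uset_bdd u) h
  unfold univIndex at this
  omega

-- alphaJump facts
lemma alphaJump_spec {u : List A} {i j : ℕ} (h : alphaJump u i = some j) :
    (∀ a : A, a ∈ (u.take j).drop i) ∧ ∀ j' < j, ¬ ∀ a : A, a ∈ (u.take j').drop i := by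
  classical
  unfold alphaJump at h
  split_ifs at h with hex
  · injection h with h
    subst h
    exact ⟨Nat.sInf_mem hex, fun j' hj' hmem => Nat.notMem_of_lt_sInf hj' hmem⟩

lemma slice_mono {u : List A} {i j j' : ℕ} (hj : j ≤ j') :
    (u.take j).drop i <+ (u.take j').drop i := by
  have : u.take j <+ u.take j' := by
    rw [show u.take j = (u.take j').take j by rw [List.take_take, min_eq_left hj]]
    exact List.take_sublist _ _
  exact this.drop i

lemma alphaJump_le_length {u : List A} {i j : ℕ} (h : alphaJump u i = some j) :
    j ≤ u.length := by
  classical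
  unfold alphaJump at h
  split_ifs at h with hex
  · injection h with h
    subst h
    obtain ⟨j₀, hj₀⟩ := hex
    refine Nat.sInf_le ?_
    intro a
    have : (u.take j₀).drop i <+ (u.take u.length).drop i := by
      rcases le_total j₀ u.length with hle | hle
      · exact slice_mono hle
      · rw [List.take_length, List.take_of_length_le hle]
    exact this.subset (hj₀ a)

lemma lt_alphaJump {u : List A} {i j : ℕ} (h : alphaJump u i = some j) : i < j := by
  by_contra hle
  push_neg at hle
  have hspec := (alphaJump_spec h).1
  have a : A := Classical.arbitrary A
  have := hspec a
  rw [List.drop_eq_nil_of_le (by simpa using (show (u.take j).length = min j u.length from List.length_take).trans_le (le_trans (min_le_left _ _) hle))] at this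
  · exact absurd this List.not_mem_nil

-- alphaIter facts
lemma alphaIter_zero (u : List A) (i : ℕ) : alphaIter u 0 i = some i := rfl

lemma alphaIter_succ (u : List A) (n i : ℕ) :
    alphaIter u (n + 1) i = (alphaIter u n i).bind (alphaJump u) := by
  unfold alphaIter
  rw [Function.iterate_succ_apply']

lemma alphaIter_bounds {u : List A} :
    ∀ {n q : ℕ}, alphaIter u n 0 = some q → n ≤ q ∧ q ≤ u.length := by
  intro n
  induction n with
  | zero => intro q h; injection h with h; omega
  | succ n ih =>
    intro q h
    rw [alphaIter_succ] at h
    cases h' : alphaIter u n 0 with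
    | none => rw [h'] at h; cases h
    | some q₀ =>
      rw [h'] at h
      rw [Option.bind_some] at h
      have h1 := ih h'
      have h2 := lt_alphaJump h
      have h3 := alphaJump_le_length h
      omega

lemma numArches_mem (u : List A) : (alphaIter u (numArches u) 0).isSome := by
  have h0 : 0 ∈ {n : ℕ | (alphaIter u n 0).isSome} := by
    show (alphaIter u 0 0).isSome
    rw [alphaIter_zero]; rfl
  have hb : BddAbove {n : ℕ | (alphaIter u n 0).isSome} := by
    refine ⟨u.length, fun n hn => ?_⟩
    obtain ⟨q, hq⟩ := Option.isSome_iff_exists.mp hn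
    have := alphaIter_bounds hq
    omega
  exact Nat.sSup_mem ⟨0, h0⟩ hb

lemma numArches_succ_none (u : List A) : alphaIter u (numArches u + 1) 0 = none := by
  by_contra h
  have hmem : numArches u + 1 ∈ {n : ℕ | (alphaIter u n 0).isSome} := by
    simpa [Option.isSome_iff_ne_none] using h
  have hb : BddAbove {n : ℕ | (alphaIter u n 0).isSome} := by
    refine ⟨u.length, fun n hn => ?_⟩
    obtain ⟨q, hq⟩ := Option.isSome_iff_exists.mp hn
    have := alphaIter_bounds hq
    omega
  have := le_csSup hb hmem
  unfold numArches at this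
  omega

-- the helper sublist lemma
lemma cons_sublist_right_of_not_mem {a : A} {l l₁ l₂ : List A}
    (h : (a :: l) <+ l₁ ++ l₂) (ha : a ∉ l₁) : (a :: l) <+ l₂ := by
  induction l₁ with
  | nil => exact h
  | cons c l₁ ih =>
    simp only [List.mem_cons, not_or] at ha
    cases h with
    | cons _ h => exact ih h ha.2
    | cons_cons _ h => exact absurd rfl ha.1

-- upper bound: words of length ≤ n embed into the first n arches
lemma sublist_take_of_alphaIter {u : List A} :
    ∀ {n q : ℕ}, alphaIter u n 0 = some q →
      ∀ w : List A, w.length ≤ n → w <+ u.take q := by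
  intro n
  induction n with
  | zero =>
    intro q h w hw
    rw [Nat.le_zero, List.length_eq_zero_iff] at hw
    simp [hw]
  | succ n ih =>
    intro q h w hw
    rw [alphaIter_succ] at h
    cases h' : alphaIter u n 0 with
    | none => rw [h'] at h; cases h
    | some q₀ =>
      rw [h'] at h
      rw [Option.bind_some] at h
      rcases w.eq_nil_or_concat with rfl | ⟨w₀, a, rfl⟩
      · exact List.nil_sublist _
      · rw [List.concat_eq_append] at hw ⊢
        have hw₀ : w₀.length ≤ n := by simpa using hw
        have h1 : w₀ <+ u.take q₀ := ih h' w₀ hw₀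
        have h2 : [a] <+ (u.take q).drop q₀ :=
          List.singleton_sublist.mpr ((alphaJump_spec h).1 a)
        have hqq : q₀ ≤ q := (lt_alphaJump h).le
        have hsplit : u.take q = u.take q₀ ++ (u.take q).drop q₀ := by
          rw [show u.take q₀ = (u.take q).take q₀ by rw [List.take_take, min_eq_left hqq]]
          rw [List.take_append_drop]
        rw [hsplit]
        exact h1.append h2

-- lower bound: the hard word
lemma hard_word {u v : List A} :
    ∀ {n q : ℕ}, alphaIter u n 0 = some q →
      ∃ x : List A, x.length = n ∧
        ∀ y : List A, (x ++ y) <+ (u ++ v) → y <+ (u.drop q ++ v) := by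
  intro n
  induction n with
  | zero =>
    intro q h
    injection h with h
    subst h
    exact ⟨[], rfl, fun y hy => by simpa using hy⟩
  | succ n ih =>
    intro q h
    rw [alphaIter_succ] at h
    cases h' : alphaIter u n 0 with
    | none => rw [h'] at h; cases h
    | some q₀ =>
      rw [h'] at h
      rw [Option.bind_some] at h
      obtain ⟨x, hxl, hx⟩ := ih h'
      have hq₀q : q₀ < q := lt_alphaJump h
      have hqlen : q ≤ u.length := alphaJump_le_length h
      have hq1 : q - 1 < u.length := by omega
      set b : A := u.get ⟨q - 1, hq1⟩ with hb
      -- b does not occur in the slice (q₀, q-1)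
      have hbnot : b ∉ (u.take (q - 1)).drop q₀ := by
        intro hbm
        refine (alphaJump_spec h).2 (q - 1) (by omega) ?_
        intro a
        have ha := (alphaJump_spec h).1 a
        have hsl : (u.take q).drop q₀ = (u.take (q-1)).drop q₀ ++ [b] := by
          have h9 : u.take q = u.take (q-1) ++ [b] := by
            rw [show q = (q-1) + 1 by omega, List.take_succ,
              List.getElem?_eq_getElem hq1]
            rfl
          rw [h9, List.drop_append_of_le_length (by rw [List.length_take]; omega)]
        rw [hsl] at ha
        rcases List.mem_append.mp ha with h1 | h1
        · exact h1
        · rw [List.mem_singleton] at h1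
          rw [h1]; exact hbm
      refine ⟨x ++ [b], by simp [hxl], fun y hy => ?_⟩
      rw [List.append_assoc] at hy
      have hy1 : (b :: y) <+ (u.drop q₀ ++ v) := hx ([b] ++ y) hy
      -- split u.drop q₀ at position q-1
      have hsplit : u.drop q₀ = (u.take (q-1)).drop q₀ ++ u.drop (q-1) := by
        conv_lhs => rw [← List.take_append_drop (q-1) u]
        rw [List.drop_append_of_le_length]
        rw [List.length_take]
        omega
      rw [hsplit, List.append_assoc] at hy1
      have hy2 : (b :: y) <+ (u.drop (q-1) ++ v) :=
        cons_sublist_right_of_not_mem hy1 hbnot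
      have hdrop : u.drop (q-1) = b :: u.drop q := by
        have h8 := List.drop_eq_getElem_cons (l := u) hq1
        rwa [show q - 1 + 1 = q by omega] at h8
      rw [hdrop, List.cons_append] at hy2
      exact List.cons_sublist_cons.mp hy2

-- key lemma
lemma key_lemma (u v : List A) :
    univIndex (u ++ v) = numArches u + univIndex (archRest u ++ v) := by
  obtain ⟨p, hp⟩ := Option.isSome_iff_exists.mp (numArches_mem u)
  have hrest : archRest u = u.drop p := by
    unfold archRest
    rw [hp]
    rfl
  set m := numArches u
  set t := univIndex (archRest u ++ v) with ht
  -- ≥ : m + t is in the set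
  have hge : m + t ∈ {k : ℕ | ∀ w : List A, w.length = k → w.Sublist (u ++ v)} := by
    intro w hw
    have h1 : w.take m <+ u.take p :=
      sublist_take_of_alphaIter hp (w.take m) (by rw [List.length_take]; omega)
    have h2 : w.drop m <+ archRest u ++ v := by
      have hm : (w.drop m).length ≤ t := by rw [List.length_drop, hw]; omega
      exact uset_mem_of_le hm (univIndex_mem (archRest u ++ v)) (w.drop m) rfl
    have hsplit : u ++ v = u.take p ++ (archRest u ++ v) := by
      rw [hrest, ← List.append_assoc, List.take_append_drop]
    rw [hsplit, ← List.take_append_drop m w]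
    exact h1.append h2
  have hge' : m + t ≤ univIndex (u ++ v) := le_csSup (uset_bdd _) hge
  -- ≤ : construct the bad word of length m + t + 1
  obtain ⟨x, hxl, hx⟩ := hard_word (v := v) hp
  have hle : univIndex (u ++ v) ≤ m + t := by
    by_contra hcon
    -- there is y of length t+1 not a sublist of archRest u ++ v
    have hnmem := univIndex_succ_not_mem (archRest u ++ v)
    rw [← ht] at hnmem
    simp only [Set.mem_setOf_eq, not_forall, Classical.not_imp] at hnmem
    obtain ⟨y, hyl, hy⟩ := hnmem
    have hmem : m + t + 1 ∈ {k : ℕ | ∀ w : List A, w.length = k → w.Sublist (u ++ v)} :=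
      uset_mem_of_le (by omega) (univIndex_mem (u ++ v))
    have hsub : (x ++ y) <+ (u ++ v) := hmem (x ++ y) (by simp [hxl, hyl]; omega)
    exact hy (by rw [hrest]; exact hx y hsub)
  omega

lemma univIndex_archRest (u : List A) : univIndex (archRest u) = 0 := by
  obtain ⟨p, hp⟩ := Option.isSome_iff_exists.mp (numArches_mem u)
  have hnone : alphaJump u p = none := by
    have := numArches_succ_none u
    rw [alphaIter_succ, hp] at this
    simpa using this
  classical
  unfold alphaJump at hnone
  split_ifs at hnone with hex
  push_neg at hex
  obtain ⟨a, ha⟩ := hex u.length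
  have hrest : archRest u = u.drop p := by
    unfold archRest; rw [hp]; rfl
  have ha' : a ∉ archRest u := by rw [hrest]; rwa [List.take_length] at ha
  have h := univIndex_mem (archRest u)
  by_contra h0
  have h1 := uset_mem_of_le (k' := 1) (k := univIndex (archRest u)) (by omega) h
  have := h1 [a] rfl
  exact ha' (this.subset (List.mem_singleton_self a))

lemma univIndex_eq_numArches (u : List A) : univIndex u = numArches u := by
  have := key_lemma u ([] : List A)
  simpa [univIndex_archRest] using this

end

/-- `ι(u·v) = ι(u) + ι(r(u)·v)` where `r(u)` is the rest of the arch factorization of `u`. -/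
theorem univIndex_append_eq {A : Type*} [Fintype A] [Nonempty A] (u v : List A) :
    univIndex (u ++ v) = univIndex u + univIndex (archRest u ++ v) := by
  rw [key_lemma, univIndex_eq_numArches u]
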